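/- Let f : (P, w) → Σ and f' : (P', w') → Σ be branched covers of finite rooted posets, of degrees d and d' respectively. Let Q = {(x, x') ∈ P × P' : f(x) = f'(x')} with the componentwise partial order, with weight function w''(x, x') = w(x) · w'(x'), and with the map h : Q → Σ given by h(x, x') = f(x). Then Q is a finite rooted poset whose root is (root of P, root of P'), and h : (Q, w'') → Σ is a branched cover of degree d · d'. (This is the poset form of the paper's assertion that the fibered product of two branched covers of a cone complex, with the product weight function, is a branched cover of the product degree.) -/

import Mathlib

open scoped Classical

/-- `r` is the unique minimal element (the root) of the poset `P`. -/
def IsRoot {P : Type*} [PartialOrder P] (r : P) : Prop :=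
  (∀ x : P, x ≤ r → x = r) ∧ ∀ x : P, (∀ y : P, y ≤ x → y = x) → x = r

/-- A branched cover of finite posets: the weights are positive, `f` restricts to an
order isomorphism from `P_x = {y ≤ x}` onto `Q_{f x} = {η ≤ f x}` for every `x`, and
for every `x` the weighted trace over `P^x = {y ≥ x}` is constant on `Q^{f x}`. -/
def IsBranchedCover {P Q : Type*} [PartialOrder P] [PartialOrder Q] [Fintype P] [Fintype Q]
    (f : P → Q) (w : P → ℤ) : Prop :=
  (∀ x : P, 1 ≤ w x) ∧
  (∀ x y z : P, y ≤ x → z ≤ x → (f y ≤ f z ↔ y ≤ z)) ∧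
  (∀ x : P, ∀ η : Q, η ≤ f x → ∃ y : P, y ≤ x ∧ f y = η) ∧
  (∀ x : P, ∀ η η' : Q, f x ≤ η → f x ≤ η' →
    ∑ y ∈ Finset.univ.filter (fun y => x ≤ y ∧ f y = η), w y =
    ∑ y ∈ Finset.univ.filter (fun y => x ≤ y ∧ f y = η'), w y)

lemma root_le {P : Type*} [PartialOrder P] [Fintype P] {r : P} (hr : IsRoot r) (x : P) :
    r ≤ x := by
  obtain ⟨y, hyx, hymin⟩ := Finset.exists_minimal (s := Finset.univ.filter (· ≤ x))
    ⟨x, by simp⟩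
  have hyle : y ≤ x := (Finset.mem_filter.mp hyx).2
  have hy : ∀ z, z ≤ y → z = y := by
    intro z hz
    by_contra h
    exact h (le_antisymm hz (hymin (Finset.mem_filter.mpr ⟨Finset.mem_univ _, le_trans hz hyle⟩)
      hz))
  have := hr.2 y hy
  rw [← this]
  exact hyle

lemma root_maps {P S : Type*} [PartialOrder P] [PartialOrder S] [Fintype P] [Fintype S]
    {f : P → S} {w : P → ℤ} (hf : IsBranchedCover f w) {rP : P} (hrP : IsRoot rP)
    {rS : S} (hrS : IsRoot rS) : f rP = rS := by
  apply hrS.2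
  intro η hη
  obtain ⟨y, hy, hfy⟩ := hf.2.2.1 rP η hη
  rw [← hfy, hrP.1 y hy]

lemma sum_factor {P P' S : Type*} [PartialOrder P] [PartialOrder P'] [PartialOrder S]
    [Fintype P] [Fintype P'] [Fintype S]
    (f : P → S) (w : P → ℤ) (f' : P' → S) (w' : P' → ℤ)
    (x : P) (x' : P') (η : S) :
    ∑ q ∈ Finset.univ.filter (fun q : {q : P × P' // f q.1 = f' q.2} =>
        x ≤ q.val.1 ∧ x' ≤ q.val.2 ∧ f q.val.1 = η), w q.val.1 * w' q.val.2 =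
    (∑ y ∈ Finset.univ.filter (fun y => x ≤ y ∧ f y = η), w y) *
    (∑ y' ∈ Finset.univ.filter (fun y' => x' ≤ y' ∧ f' y' = η), w' y') := by
  rw [Finset.sum_mul_sum, ← Finset.sum_product']
  refine Finset.sum_bij' (fun q _ => (q.val.1, q.val.2))
    (fun p hp => ⟨p, ?_⟩) ?_ ?_ ?_ ?_ ?_
  · obtain ⟨h1, h2⟩ := Finset.mem_product.mp hp
    simp only [Finset.mem_filter] at h1 h2
    rw [h1.2.2, h2.2.2]
  · intro q hq
    simp only [Finset.mem_filter, Finset.mem_univ, true_and] at hq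
    have hq2 : f' q.val.2 = η := by rw [← q.prop]; exact hq.2.2
    simp only [Finset.mem_product, Finset.mem_filter, Finset.mem_univ, true_and]
    exact ⟨⟨hq.1, hq.2.2⟩, hq.2.1, hq2⟩
  · intro p hp
    obtain ⟨h1, h2⟩ := Finset.mem_product.mp hp
    simp only [Finset.mem_filter, Finset.mem_univ, true_and] at h1 h2
    simp only [Finset.mem_filter, Finset.mem_univ, true_and]
    exact ⟨h1.1, h2.1, h1.2⟩
  · intro q hq; rfl
  · intro p hp; rfl
  · intro q hq; rfl

/-- The fibered product of two branched covers of finite rooted posets, equipped with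
the product weight function, is a branched cover whose root is the pair of roots and
whose degree is the product of the degrees. -/
theorem branchedCover_fiberProduct {P P' S : Type*} [PartialOrder P] [PartialOrder P']
    [PartialOrder S] [Fintype P] [Fintype P'] [Fintype S]
    (f : P → S) (w : P → ℤ) (f' : P' → S) (w' : P' → ℤ)
    (hf : IsBranchedCover f w) (hf' : IsBranchedCover f' w')
    (rP : P) (hrP : IsRoot rP) (rP' : P') (hrP' : IsRoot rP')
    (rS : S) (hrS : IsRoot rS) :
    ∃ hr : f rP = f' rP',
      IsRoot (⟨(rP, rP'), hr⟩ : {q : P × P' // f q.1 = f' q.2}) ∧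
      IsBranchedCover (fun q : {q : P × P' // f q.1 = f' q.2} => f q.val.1)
        (fun q : {q : P × P' // f q.1 = f' q.2} => w q.val.1 * w' q.val.2) ∧
      (fun q : {q : P × P' // f q.1 = f' q.2} => w q.val.1 * w' q.val.2)
          ⟨(rP, rP'), hr⟩ = w rP * w' rP' := by
  have hr : f rP = f' rP' := (root_maps hf hrP hrS).trans (root_maps hf' hrP' hrS).symm
  have hleast : ∀ q : {q : P × P' // f q.1 = f' q.2},
      (⟨(rP, rP'), hr⟩ : {q : P × P' // f q.1 = f' q.2}) ≤ q := by
    intro q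
    rw [Subtype.mk_le_mk]
    exact ⟨root_le hrP _, root_le hrP' _⟩
  refine ⟨hr, ⟨fun x hx => le_antisymm hx (hleast x),
      fun x hmin => (hmin _ (hleast x)).symm⟩, ⟨?_, ?_, ?_, ?_⟩, rfl⟩
  · intro q
    have h1 := hf.1 q.val.1
    have h2 := hf'.1 q.val.2
    show (1:ℤ) ≤ w q.val.1 * w' q.val.2
    nlinarith
  · intro x y z hyx hzx
    have hyx1 : y.val.1 ≤ x.val.1 := hyx.1
    have hyx2 : y.val.2 ≤ x.val.2 := hyx.2
    have hzx1 : z.val.1 ≤ x.val.1 := hzx.1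
    have hzx2 : z.val.2 ≤ x.val.2 := hzx.2
    constructor
    · intro hfz
      have h1 : y.val.1 ≤ z.val.1 := (hf.2.1 x.val.1 _ _ hyx1 hzx1).mp hfz
      have hfz' : f' y.val.2 ≤ f' z.val.2 := by rw [← y.prop, ← z.prop]; exact hfz
      have h2 : y.val.2 ≤ z.val.2 := (hf'.2.1 x.val.2 _ _ hyx2 hzx2).mp hfz'
      exact Subtype.coe_le_coe.mp ⟨h1, h2⟩
    · intro h
      exact (hf.2.1 x.val.1 _ _ hyx1 hzx1).mpr h.1
  · intro x η hη
    obtain ⟨y, hy, hfy⟩ := hf.2.2.1 x.val.1 η hη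
    have hη' : η ≤ f' x.val.2 := x.prop ▸ hη
    obtain ⟨y', hy', hfy'⟩ := hf'.2.2.1 x.val.2 η hη'
    exact ⟨⟨(y, y'), by rw [hfy, hfy']⟩, Subtype.coe_le_coe.mp ⟨hy, hy'⟩, hfy⟩
  · intro x η η' hη hη'
    have hη1 : f x.val.1 ≤ η := hη
    have hη1' : f x.val.1 ≤ η' := hη'
    have hη2 : f' x.val.2 ≤ η := x.prop ▸ hη1
    have hη2' : f' x.val.2 ≤ η' := x.prop ▸ hη1'
    trans (∑ q ∈ Finset.univ.filter (fun q : {q : P × P' // f q.1 = f' q.2} =>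
        x.val.1 ≤ q.val.1 ∧ x.val.2 ≤ q.val.2 ∧ f q.val.1 = η), w q.val.1 * w' q.val.2)
    · refine Finset.sum_congr ?_ fun _ _ => rfl
      ext q
      simp only [Finset.mem_filter, Finset.mem_univ, true_and]
      rw [← Subtype.coe_le_coe, Prod.le_def, and_assoc]
    trans (∑ q ∈ Finset.univ.filter (fun q : {q : P × P' // f q.1 = f' q.2} =>
        x.val.1 ≤ q.val.1 ∧ x.val.2 ≤ q.val.2 ∧ f q.val.1 = η'), w q.val.1 * w' q.val.2)
    · rw [sum_factor, sum_factor, hf.2.2.2 x.val.1 η η' hη1 hη1',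
        hf'.2.2.2 x.val.2 η η' hη2 hη2']
    · refine Finset.sum_congr ?_ fun _ _ => rfl
      ext q
      simp only [Finset.mem_filter, Finset.mem_univ, true_and]
      rw [← Subtype.coe_le_coe, Prod.le_def, and_assoc]
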